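/- Let S : ℝ₊^N → ℝ₊^N be continuous, monotone, and positively homogeneous (S(tx) = tS(x) for all t > 0), let ε > 0, set T_ε(x) = S(x) + ε·1, and let ‖·‖ be a monotone norm on ℝ^N. Let (p_n) ⊂ (0,∞) with p_n → ∞, and for each n let x_{p_n} ∈ ℝ₊₊^N satisfy T_ε(x_{p_n}) = (‖T_ε(x_{p_n})‖/p_n)·x_{p_n} and ‖x_{p_n}‖ = p_n. Then every accumulation point u of the normalized sequence (x_{p_n}/p_n) satisfies ‖u‖ = 1 and S(u) = ρ(S)·u; i.e., u is an eigenvector of S associated with the eigenvalue ρ(S). -/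

import Mathlib

open Filter Topology

/-- For `T_ε(x) = S(x) + ε·1`, a sequence `p_n → ∞` and normalized conditional
eigenvectors `X n ∈ ℝ₊₊^N` with `T_ε(X n) = (‖T_ε(X n)‖/p_n)·(X n)` and `‖X n‖ = p_n`,
every accumulation point `u` of the normalized sequence `(X n / p_n)` satisfies
`‖u‖ = 1` and `S(u) = ρ(S)·u`. -/
theorem stmt_5 (N : ℕ) (hN : 1 ≤ N)
    (S : (Fin N → ℝ) → (Fin N → ℝ))
    (hS_nonneg : ∀ x : Fin N → ℝ, (∀ i, 0 ≤ x i) → ∀ i, 0 ≤ S x i)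
    (hS_cont : ContinuousOn S {x : Fin N → ℝ | ∀ i, 0 ≤ x i})
    (hS_mono : ∀ x y : Fin N → ℝ, (∀ i, 0 ≤ x i) → (∀ i, 0 ≤ y i) → x ≤ y → S x ≤ S y)
    (hS_hom : ∀ t : ℝ, 0 < t → ∀ x : Fin N → ℝ, (∀ i, 0 ≤ x i) → S (t • x) = t • S x)
    (ε : ℝ) (hε : 0 < ε)
    (Tε : (Fin N → ℝ) → (Fin N → ℝ))
    (hTε : ∀ x, Tε x = S x + ε • (1 : Fin N → ℝ))
    (nrm : (Fin N → ℝ) → ℝ)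
    (hnrm_zero : ∀ x, nrm x = 0 ↔ x = 0)
    (hnrm_smul : ∀ (a : ℝ) (x : Fin N → ℝ), nrm (a • x) = |a| * nrm x)
    (hnrm_add : ∀ x y : Fin N → ℝ, nrm (x + y) ≤ nrm x + nrm y)
    (hnrm_mono : ∀ x y : Fin N → ℝ, (0 : Fin N → ℝ) ≤ x → x ≤ y → nrm x ≤ nrm y)
    (p : ℕ → ℝ) (hp_pos : ∀ n, 0 < p n) (hp_lim : Tendsto p atTop atTop)
    (X : ℕ → (Fin N → ℝ))
    (hX : ∀ n : ℕ,
      (∀ i, 0 < X n i) ∧ Tε (X n) = (nrm (Tε (X n)) / p n) • X n ∧ nrm (X n) = p n)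
    (u : Fin N → ℝ)
    (hu : MapClusterPt u atTop (fun n : ℕ => (p n)⁻¹ • X n)) :
    nrm u = 1 ∧
    S u = (sSup {lam : ℝ | 0 ≤ lam ∧
      ∃ w : Fin N → ℝ, (∀ i, 0 ≤ w i) ∧ w ≠ 0 ∧ S w = lam • w}) • u := by
  classical
  -- basic norm facts
  have hnrm0 : nrm 0 = 0 := (hnrm_zero 0).mpr rfl
  have hnrm_neg : ∀ x, nrm (-x) = nrm x := by
    intro x
    have := hnrm_smul (-1) x
    simpa using this
  have hnrm_nonneg : ∀ x, 0 ≤ nrm x := by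
    intro x
    have h := hnrm_add x (-x)
    simp only [add_neg_cancel, hnrm0, hnrm_neg] at h
    linarith
  have hnrm_sub : ∀ x y, |nrm x - nrm y| ≤ nrm (x - y) := by
    intro x y
    rw [abs_sub_le_iff]
    constructor
    · have := hnrm_add (x - y) y; simp at this; linarith
    · have := hnrm_add (y - x) x; simp at this
      have h2 : nrm (y - x) = nrm (x - y) := by rw [← hnrm_neg (x - y)]; ring_nf
      linarith
  -- nrm is dominated by a continuous function
  have hbound : ∀ z : Fin N → ℝ, nrm z ≤ ∑ i, |z i| * nrm (Pi.single i 1) := by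
    intro z
    have hsingle : ∀ i, Pi.single i (z i) = (z i) • (Pi.single i (1:ℝ) : Fin N → ℝ) := by
      intro i
      funext j
      by_cases h : j = i <;> simp [Pi.single_apply, h]
    calc nrm z = nrm (∑ i, Pi.single i (z i)) := by rw [Finset.univ_sum_single]
      _ ≤ ∑ i, nrm (Pi.single i (z i)) :=
          Finset.le_sum_of_subadditive nrm hnrm0.le hnrm_add _ _
      _ = ∑ i, |z i| * nrm (Pi.single i 1) := by
          refine Finset.sum_congr rfl fun i _ => ?_
          rw [hsingle i, hnrm_smul]
  have hnrm_cont : Continuous nrm := by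
    rw [continuous_iff_continuousAt]
    intro x0
    rw [ContinuousAt, tendsto_iff_dist_tendsto_zero]
    have h1 : Tendsto (fun x => ∑ i, |x i - x0 i| * nrm (Pi.single i 1)) (𝓝 x0) (𝓝 0) := by
      have hc : Continuous (fun x : Fin N → ℝ => ∑ i, |x i - x0 i| * nrm (Pi.single i 1)) := by
        fun_prop
      have := hc.tendsto x0
      simpa using this
    apply squeeze_zero (fun x => dist_nonneg) _ h1
    intro x
    rw [Real.dist_eq]
    exact (hnrm_sub x x0).trans (hbound _)
  -- subsequence
  obtain ⟨φ, hφ, hlim⟩ := TopologicalSpace.FirstCountableTopology.tendsto_subseq hu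
  set Y : ℕ → (Fin N → ℝ) := fun n => (p n)⁻¹ • X n with hY
  have hYpos : ∀ n i, 0 < Y n i := fun n i =>
    mul_pos (inv_pos.mpr (hp_pos n)) ((hX n).1 i)
  have hYnonneg : ∀ n, ∀ i, (0:ℝ) ≤ Y n i := fun n i => (hYpos n i).le
  have hXY : ∀ n, X n = p n • Y n := fun n => (smul_inv_smul₀ (hp_pos n).ne' (X n)).symm
  have hnrmY : ∀ n, nrm (Y n) = 1 := by
    intro n
    rw [hY]
    simp only [hnrm_smul, (hX n).2.2, abs_of_pos (inv_pos.mpr (hp_pos n))]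
    exact inv_mul_cancel₀ (hp_pos n).ne'
  -- u is nonnegative with norm 1
  have hunonneg : ∀ i, 0 ≤ u i := by
    intro i
    have hci : Tendsto (fun k => Y (φ k) i) atTop (𝓝 (u i)) :=
      ((continuous_apply i).tendsto u).comp hlim
    exact ge_of_tendsto' hci (fun k => hYnonneg _ i)
  have hnu : nrm u = 1 := by
    have : Tendsto (fun k => nrm (Y (φ k))) atTop (𝓝 (nrm u)) :=
      (hnrm_cont.tendsto u).comp hlim
    simp only [hnrmY] at this
    exact tendsto_nhds_unique this tendsto_const_nhds
  -- the eigen equation for Y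
  set lam : ℕ → ℝ := fun n => nrm (Tε (X n)) / p n with hlamdef
  have hTeq : ∀ n, Tε (X n) = lam n • X n := fun n => (hX n).2.1
  have heqn : ∀ n, S (Y n) + ((p n)⁻¹ * ε) • (1 : Fin N → ℝ) = lam n • Y n := by
    intro n
    have h1 : Tε (X n) = p n • S (Y n) + ε • (1 : Fin N → ℝ) := by
      rw [hTε, hXY n, hS_hom (p n) (hp_pos n) (Y n) (hYnonneg n)]
    have h2 : (p n)⁻¹ • Tε (X n) = lam n • Y n := by
      rw [hTeq n, smul_comm]
    rw [h1] at h2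
    rw [← h2, smul_add, smul_smul, inv_mul_cancel₀ (hp_pos n).ne', one_smul, smul_smul]
  have hlam_nonneg : ∀ n, 0 ≤ lam n :=
    fun n => div_nonneg (hnrm_nonneg _) (hp_pos n).le
  have hlamval : ∀ n, lam n = nrm (S (Y n) + ((p n)⁻¹ * ε) • (1 : Fin N → ℝ)) := by
    intro n
    rw [heqn n, hnrm_smul, hnrmY, abs_of_nonneg (hlam_nonneg n), mul_one]
  -- limits along the subsequence
  have hpinv : Tendsto (fun k => (p (φ k))⁻¹) atTop (𝓝 0) :=
    (tendsto_inv_atTop_zero).comp (hp_lim.comp hφ.tendsto_atTop)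
  have hSY : Tendsto (fun k => S (Y (φ k))) atTop (𝓝 (S u)) := by
    have hmem : ∀ k, Y (φ k) ∈ {x : Fin N → ℝ | ∀ i, 0 ≤ x i} := fun k => hYnonneg _
    have humem : u ∈ {x : Fin N → ℝ | ∀ i, 0 ≤ x i} := hunonneg
    have hw : Tendsto (fun k => Y (φ k)) atTop (𝓝[{x : Fin N → ℝ | ∀ i, 0 ≤ x i}] u) :=
      tendsto_nhdsWithin_iff.mpr ⟨hlim, Eventually.of_forall hmem⟩
    exact (hS_cont u humem).tendsto.comp hw
  have hvlim : Tendsto (fun k => S (Y (φ k)) + ((p (φ k))⁻¹ * ε) • (1 : Fin N → ℝ))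
      atTop (𝓝 (S u)) := by
    have h2 : Tendsto (fun k => ((p (φ k))⁻¹ * ε) • (1 : Fin N → ℝ)) atTop
        (𝓝 ((0 * ε) • (1 : Fin N → ℝ))) := ((hpinv.mul_const ε).smul_const _)
    simpa using hSY.add h2
  have hlamlim : Tendsto (fun k => lam (φ k)) atTop (𝓝 (nrm (S u))) := by
    have h := (hnrm_cont.tendsto (S u)).comp hvlim
    have heq : (fun k => lam (φ k)) =
        (nrm ∘ fun k => S (Y (φ k)) + ((p (φ k))⁻¹ * ε) • (1 : Fin N → ℝ)) :=
      funext fun k => hlamval (φ k)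
    rw [heq]
    exact h
  -- the eigen equation for u
  have heig : S u = nrm (S u) • u := by
    have hL : Tendsto (fun k => lam (φ k) • Y (φ k)) atTop (𝓝 (nrm (S u) • u)) :=
      hlamlim.smul hlim
    have hR : Tendsto (fun k => lam (φ k) • Y (φ k)) atTop (𝓝 (S u)) := by
      simp only [← heqn]; exact hvlim
    exact (tendsto_nhds_unique hR hL)
  set L := nrm (S u) with hLdef
  set E := {lam : ℝ | 0 ≤ lam ∧
      ∃ w : Fin N → ℝ, (∀ i, 0 ≤ w i) ∧ w ≠ 0 ∧ S w = lam • w} with hE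
  have hune : u ≠ 0 := by
    intro h
    rw [h, hnrm0] at hnu
    norm_num at hnu
  have hLmem : L ∈ E := ⟨hnrm_nonneg _, u, hunonneg, hune, heig⟩
  -- L is an upper bound of E
  have hub : ∀ μ ∈ E, μ ≤ L := by
    rintro μ ⟨hμ0, w, hw0, hwne, hweq⟩
    have key : ∀ n, μ ≤ lam n := by
      intro n
      obtain ⟨i0, hi0⟩ : ∃ i, w i ≠ 0 := by
        by_contra h
        push_neg at h
        exact hwne (funext h)
      have hi0pos : 0 < w i0 := lt_of_le_of_ne (hw0 i0) (Ne.symm hi0)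
      set sf := Finset.univ.filter (fun i => 0 < w i) with hsf
      have hne : sf.Nonempty := ⟨i0, by simp [hsf, hi0pos]⟩
      obtain ⟨j, hjmem, hjmin⟩ := Finset.exists_min_image sf (fun i => X n i / w i) hne
      have hwj : 0 < w j := by
        have := Finset.mem_filter.mp hjmem
        exact this.2
      set t := X n j / w j with ht
      have htpos : 0 < t := div_pos ((hX n).1 j) hwj
      have htw : t • w ≤ X n := by
        intro i
        show t * w i ≤ X n i
        rcases (hw0 i).lt_or_eq with hwi | hwi
        · have hmin : t ≤ X n i / w i := hjmin i (by simp [hsf, hwi])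
          calc t * w i ≤ (X n i / w i) * w i :=
                mul_le_mul_of_nonneg_right hmin (hw0 i)
            _ = X n i := div_mul_cancel₀ _ (ne_of_gt hwi)
        · rw [← hwi, mul_zero]
          exact ((hX n).1 i).le
      have hStw : S (t • w) = (t * μ) • w := by
        rw [hS_hom t htpos w hw0, hweq, smul_smul]
      have htw0 : ∀ i, 0 ≤ (t • w) i := fun i => smul_nonneg htpos.le (hw0 i)
      have hmono : S (t • w) ≤ S (X n) := hS_mono _ _ htw0 (fun i => ((hX n).1 i).le) htw
      have hSX : S (X n) ≤ Tε (X n) := by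
        rw [hTε]
        intro i
        simp only [Pi.add_apply, Pi.smul_apply, Pi.one_apply, smul_eq_mul, mul_one]
        linarith [hε.le]
      have hfinal : (t * μ) • w ≤ lam n • X n := by
        rw [← hStw, ← hTeq n]
        exact le_trans hmono hSX
      have hj := hfinal j
      simp only [Pi.smul_apply, smul_eq_mul] at hj
      have hXj : X n j = t * w j := by
        rw [ht]; field_simp
      rw [hXj] at hj
      have htwj : 0 < t * w j := mul_pos htpos hwj
      nlinarith
    exact ge_of_tendsto' hlamlim (fun k => key (φ k))
  have hsup : sSup E = L :=
    le_antisymm (csSup_le ⟨L, hLmem⟩ hub) (le_csSup ⟨L, hub⟩ hLmem)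
  exact ⟨hnu, by rw [hsup]; exact heig⟩
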